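/- Let Ω, Ω̃, Φ be symmetric N×N real matrices with Ω and Ω̃ positive definite and Ω̃ = Ω + Φ, let β > 0 and c ∈ ℝ, and let x, x̃, u, ũ, r, r̃ ∈ ℝ^N. Assume: (i) ⟨x̃, Ω̃x̃⟩ − ⟨x, Ω̃x⟩ ≤ 4c; (ii) ⟨x̃, Φx̃⟩ = ⟨ũ, Ω̃⁻¹ΦΩ̃⁻¹ũ⟩ and ⟨x, Φx⟩ = ⟨u, Ω⁻¹ΦΩ⁻¹u⟩; (iii) β‖ũ‖₂ ≤ (1/4)⟨r̃, Ω̃⁻¹r̃⟩ and β‖u‖₂ ≤ (1/4)⟨r, Ω⁻¹r⟩. Then ⟨x̃, Ωx̃⟩ − ⟨x, Ωx⟩ ≤ (1/(16β²))·(⟨r̃, Ω̃⁻¹r̃⟩)²·‖Ω̃⁻¹ΦΩ̃⁻¹‖ + (1/(16β²))·(⟨r, Ω⁻¹r⟩)²·‖Ω⁻¹ΦΩ⁻¹‖ + 4c, where ‖·‖ denotes the ℓ₂ operator norm of a matrix. (Theorem 5 of the paper, the accuracy guarantee for ridge regression on an evolving dataset, stated with the hypotheses used in its proof: x = vec(X*)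 and x̃ = vec(X̃*) are the retained and the true solutions, u and ũ the corresponding dual images (I_d⊗Q)ᵀvec(λ*) and (I_d⊗Q)ᵀvec(λ̃*), r = Λᵀy and r̃ = Λ̃ᵀy, Ω and Ω̃ the ridge matrices for the original and evolved data, Φ = Ω̃ − Ω their difference, hypothesis (i) is inequality (16) derived from the threshold condition of Algorithm 1, hypothesis (ii) is the substitution made in the proof, and hypothesis (iii) is the conclusion of Lemma 5 for both datasets.) -/

import Mathlib

open Matrix

/-- The ℓ₂ operator norm of a real square matrix, i.e. the norm of the
continuous linear map it induces on Euclidean space. -/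
noncomputable def l2OpNorm {N : ℕ} (S : Matrix (Fin N) (Fin N) ℝ) : ℝ :=
  ‖Matrix.toEuclideanCLM (𝕜 := ℝ) S‖

lemma quad_bound {N : ℕ} (S : Matrix (Fin N) (Fin N) ℝ) (v : Fin N → ℝ) :
    |v ⬝ᵥ S.mulVec v| ≤ (∑ i, v i ^ 2) * l2OpNorm S := by
  set w : EuclideanSpace ℝ (Fin N) := (WithLp.equiv 2 _).symm v with hw
  have h1 : v ⬝ᵥ S.mulVec v = (inner ℝ w ((Matrix.toEuclideanCLM (𝕜 := ℝ) S) w) : ℝ) := by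
    rw [Matrix.inner_toEuclideanCLM]
    simp [hw]
  have h2 : ‖w‖ ^ 2 = ∑ i, v i ^ 2 := by
    rw [EuclideanSpace.norm_eq, Real.sq_sqrt (by positivity)]
    simp [hw, sq_abs]
  rw [h1]
  calc |(inner ℝ w ((Matrix.toEuclideanCLM (𝕜 := ℝ) S) w) : ℝ)|
      ≤ ‖w‖ * ‖(Matrix.toEuclideanCLM (𝕜 := ℝ) S) w‖ := by
        exact abs_real_inner_le_norm _ _
    _ ≤ ‖w‖ * (‖Matrix.toEuclideanCLM (𝕜 := ℝ) S‖ * ‖w‖) := by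
        gcongr; exact ContinuousLinearMap.le_opNorm _ _
    _ = (∑ i, v i ^ 2) * l2OpNorm S := by rw [← h2, l2OpNorm]; ring

lemma sq_sum_le {N : ℕ} (β q : ℝ) (hβ : 0 < β) (v : Fin N → ℝ)
    (h : β * Real.sqrt (∑ i, (v i) ^ 2) ≤ (1 / 4) * q) :
    (∑ i, (v i) ^ 2) ≤ (1 / (16 * β ^ 2)) * q ^ 2 := by
  have hs : Real.sqrt (∑ i, (v i) ^ 2) ≤ q / (4 * β) := by
    rw [le_div_iff₀ (by positivity)]
    nlinarith [h]
  have hnn : (0:ℝ) ≤ Real.sqrt (∑ i, (v i) ^ 2) := Real.sqrt_nonneg _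
  calc (∑ i, (v i) ^ 2)
      = Real.sqrt (∑ i, (v i) ^ 2) ^ 2 :=
        (Real.sq_sqrt (show (0:ℝ) ≤ ∑ i, (v i) ^ 2 by positivity)).symm
    _ ≤ (q / (4 * β)) ^ 2 := pow_le_pow_left₀ hnn hs 2
    _ = (1 / (16 * β ^ 2)) * q ^ 2 := by rw [div_pow, mul_pow]; ring

/-- **Theorem 5 of the paper: accuracy guarantee for ridge regression on an
evolving dataset.**  Here `Ωt`, `xt`, `ut`, `rt` stand for `Ω̃`, `x̃`, `ũ`, `r̃`.
Assuming (i) `⟨x̃, Ω̃x̃⟩ − ⟨x, Ω̃x⟩ ≤ 4c`, (ii) the substitutions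
`⟨x̃, Φx̃⟩ = ⟨ũ, Ω̃⁻¹ΦΩ̃⁻¹ũ⟩` and `⟨x, Φx⟩ = ⟨u, Ω⁻¹ΦΩ⁻¹u⟩`, and (iii) the
conclusions `β‖ũ‖₂ ≤ (1/4)⟨r̃, Ω̃⁻¹r̃⟩` and `β‖u‖₂ ≤ (1/4)⟨r, Ω⁻¹r⟩` of Lemma 5,
we get
`⟨x̃,Ωx̃⟩ − ⟨x,Ωx⟩ ≤ (1/(16β²))(⟨r̃,Ω̃⁻¹r̃⟩)²‖Ω̃⁻¹ΦΩ̃⁻¹‖ + (1/(16β²))(⟨r,Ω⁻¹r⟩)²‖Ω⁻¹ΦΩ⁻¹‖ + 4c`. -/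
theorem evolving_ridge_regression_accuracy
    (N : ℕ) (Ω Ωt Φ : Matrix (Fin N) (Fin N) ℝ)
    (hΩ : Ω.PosDef) (hΩt : Ωt.PosDef) (hΦ : Φ.IsSymm)
    (hsum : Ωt = Ω + Φ)
    (β : ℝ) (hβ : 0 < β) (c : ℝ)
    (x xt u ut r rt : Fin N → ℝ)
    (h₁ : xt ⬝ᵥ Ωt.mulVec xt - x ⬝ᵥ Ωt.mulVec x ≤ 4 * c)
    (h₂ : xt ⬝ᵥ Φ.mulVec xt = ut ⬝ᵥ (Ωt⁻¹ * Φ * Ωt⁻¹).mulVec ut)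
    (h₃ : x ⬝ᵥ Φ.mulVec x = u ⬝ᵥ (Ω⁻¹ * Φ * Ω⁻¹).mulVec u)
    (h₄ : β * Real.sqrt (∑ i, (ut i) ^ 2) ≤ (1 / 4) * (rt ⬝ᵥ Ωt⁻¹.mulVec rt))
    (h₅ : β * Real.sqrt (∑ i, (u i) ^ 2) ≤ (1 / 4) * (r ⬝ᵥ Ω⁻¹.mulVec r)) :
    xt ⬝ᵥ Ω.mulVec xt - x ⬝ᵥ Ω.mulVec x
      ≤ (1 / (16 * β ^ 2)) * (rt ⬝ᵥ Ωt⁻¹.mulVec rt) ^ 2 * l2OpNorm (Ωt⁻¹ * Φ * Ωt⁻¹)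
        + (1 / (16 * β ^ 2)) * (r ⬝ᵥ Ω⁻¹.mulVec r) ^ 2 * l2OpNorm (Ω⁻¹ * Φ * Ω⁻¹)
        + 4 * c := by
  have hΩeq : Ω = Ωt - Φ := by rw [hsum, add_sub_cancel_right]
  have hspl : ∀ v : Fin N → ℝ, v ⬝ᵥ Ω.mulVec v = v ⬝ᵥ Ωt.mulVec v - v ⬝ᵥ Φ.mulVec v := by
    intro v
    rw [hΩeq, Matrix.sub_mulVec, dotProduct_sub]
  have honn : 0 ≤ l2OpNorm (Ωt⁻¹ * Φ * Ωt⁻¹) := norm_nonneg _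
  have honn' : 0 ≤ l2OpNorm (Ω⁻¹ * Φ * Ω⁻¹) := norm_nonneg _
  have b1 : -(xt ⬝ᵥ Φ.mulVec xt)
      ≤ (1 / (16 * β ^ 2)) * (rt ⬝ᵥ Ωt⁻¹.mulVec rt) ^ 2 * l2OpNorm (Ωt⁻¹ * Φ * Ωt⁻¹) := by
    rw [h₂]
    calc -(ut ⬝ᵥ (Ωt⁻¹ * Φ * Ωt⁻¹).mulVec ut) ≤ |ut ⬝ᵥ (Ωt⁻¹ * Φ * Ωt⁻¹).mulVec ut| :=
          neg_le_abs _
      _ ≤ (∑ i, (ut i) ^ 2) * l2OpNorm (Ωt⁻¹ * Φ * Ωt⁻¹) := quad_bound _ _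
      _ ≤ (1 / (16 * β ^ 2)) * (rt ⬝ᵥ Ωt⁻¹.mulVec rt) ^ 2 * l2OpNorm (Ωt⁻¹ * Φ * Ωt⁻¹) := by
          have := sq_sum_le β _ hβ ut h₄
          nlinarith
  have b2 : x ⬝ᵥ Φ.mulVec x
      ≤ (1 / (16 * β ^ 2)) * (r ⬝ᵥ Ω⁻¹.mulVec r) ^ 2 * l2OpNorm (Ω⁻¹ * Φ * Ω⁻¹) := by
    rw [h₃]
    calc u ⬝ᵥ (Ω⁻¹ * Φ * Ω⁻¹).mulVec u ≤ |u ⬝ᵥ (Ω⁻¹ * Φ * Ω⁻¹).mulVec u| := le_abs_self _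
      _ ≤ (∑ i, (u i) ^ 2) * l2OpNorm (Ω⁻¹ * Φ * Ω⁻¹) := quad_bound _ _
      _ ≤ (1 / (16 * β ^ 2)) * (r ⬝ᵥ Ω⁻¹.mulVec r) ^ 2 * l2OpNorm (Ω⁻¹ * Φ * Ω⁻¹) := by
          have := sq_sum_le β _ hβ u h₅
          nlinarith
  rw [hspl xt, hspl x]
  linarith
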